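/- Fix sets X, Y and a partial function a : Y ⇀ X, and let f : X ⇀ Y. Then there exists h : X ⇀ Y with f = f⬝a⬝h (equivalently, f⬝a is R-related to f in the sandwich semigroup sense, f ∈ P₁ᵃ) if and only if ran(f) ⊆ dom(a) and a is injective on ran(f) (i.e., for all y, z ∈ ran(f), a(y) = a(z) implies y = z). Moreover these conditions are equivalent to: dom(f⬝a) = dom(f) and ker(f⬝a) = ker(f). -/

import Mathlib

/-- The kernel of a partial function, as a binary relation: `x` and `y` are related iff both lie
in the domain and have the same value. -/
def pker {α β : Type*} (f : α →. β) : α → α → Prop :=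
  fun x y => x ∈ f.Dom ∧ y ∈ f.Dom ∧ f x = f y

/-- Fix `a : Y ⇀ X` and `f : X ⇀ Y`.  Then `f ∈ P₁ᵃ`, i.e. there exists
`h : X ⇀ Y` with `f = f⬝a⬝h`, iff `ran f ⊆ dom a` and `a` is injective on `ran f`; and these
conditions are in turn equivalent to `dom (f⬝a) = dom f` and `ker (f⬝a) = ker f`. -/
theorem P1a_iff_PT {X Y : Type*} (a : Y →. X) (f : X →. Y) :
    ((∃ h : X →. Y, f = h.comp (a.comp f)) ↔
        (f.ran ⊆ a.Dom ∧ ∀ y ∈ f.ran, ∀ z ∈ f.ran, a y = a z → y = z)) ∧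
    ((f.ran ⊆ a.Dom ∧ ∀ y ∈ f.ran, ∀ z ∈ f.ran, a y = a z → y = z) ↔
        ((a.comp f).Dom = f.Dom ∧ pker (a.comp f) = pker f)) := by
  classical
  have memcomp : ∀ (x : X) (u : X), u ∈ (a.comp f) x ↔ ∃ y, y ∈ f x ∧ u ∈ a y := by
    intro x u
    rw [PFun.comp_apply]; exact Part.mem_bind_iff
  constructor
  · constructor
    · rintro ⟨h, hf⟩
      have key : ∀ y ∈ f.ran, y ∈ a.Dom := by
        rintro y ⟨x, hy⟩
        have hx : y ∈ (h.comp (a.comp f)) x := hf ▸ hy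
        replace hx := Part.mem_bind_iff.mp hx
        obtain ⟨u, hu, _⟩ := hx
        rw [memcomp] at hu
        obtain ⟨z, hz, hu⟩ := hu
        have : z = y := Part.mem_unique hz hy
        subst this
        exact Part.dom_iff_mem.mpr ⟨u, hu⟩
      refine ⟨key, ?_⟩
      rintro y ⟨x, hy⟩ z ⟨x', hz⟩ haz
      -- y ∈ h (a y value), z ∈ h (a z value), a y = a z
      have hx : y ∈ (h.comp (a.comp f)) x := hf ▸ hy
      have hx' : z ∈ (h.comp (a.comp f)) x' := hf ▸ hz
      replace hx := Part.mem_bind_iff.mp hx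
      replace hx' := Part.mem_bind_iff.mp hx'
      obtain ⟨u, hu, hyu⟩ := hx
      obtain ⟨v, hv, hzv⟩ := hx'
      rw [memcomp] at hu hv
      obtain ⟨y', hy', huy⟩ := hu
      obtain ⟨z', hz', hvz⟩ := hv
      have ey : y' = y := Part.mem_unique hy' hy
      have ez : z' = z := Part.mem_unique hz' hz
      subst ey; subst ez
      have huv : u = v := by
        rw [haz] at huy
        exact Part.mem_unique huy hvz
      subst huv
      exact Part.mem_unique hyu hzv
    · rintro ⟨hdom, hinj⟩
      refine ⟨fun u => ⟨∃ y, y ∈ f.ran ∧ u ∈ a y, fun hp => Classical.choose hp⟩, ?_⟩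
      apply PFun.ext
      intro x y
      constructor
      · intro hy
        have hyr : y ∈ f.ran := ⟨x, hy⟩
        have hda : (a y).Dom := hdom hyr
        set u := (a y).get hda with hu
        have hua : u ∈ a y := Part.get_mem hda
        refine Part.mem_bind_iff.mpr ?_
        refine ⟨u, (memcomp x u).mpr ⟨y, hy, hua⟩, ?_⟩
        have hp : ∃ y', y' ∈ f.ran ∧ u ∈ a y' := ⟨y, hyr, hua⟩
        refine Part.mem_mk_iff.mpr ⟨hp, ?_⟩
        obtain ⟨hy'r, hu'⟩ := Classical.choose_spec hp
        have : a (Classical.choose hp) = a y := by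
          rw [Part.eq_some_iff.mpr hu', Part.eq_some_iff.mpr hua]
        exact hinj _ hy'r _ hyr this
      · intro hy
        replace hy := Part.mem_bind_iff.mp hy
        obtain ⟨u, hu, hyu⟩ := hy
        rw [memcomp] at hu
        obtain ⟨z, hz, huz⟩ := hu
        obtain ⟨hp, hval⟩ := Part.mem_mk_iff.mp hyu
        obtain ⟨hyr, hu'⟩ := Classical.choose_spec hp
        have : a (Classical.choose hp) = a z := by
          rw [Part.eq_some_iff.mpr hu', Part.eq_some_iff.mpr huz]
        have := hinj _ hyr _ ⟨x, hz⟩ this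
        rw [← hval, this]
        exact hz
  · constructor
    · rintro ⟨hdom, hinj⟩
      have hDom : (a.comp f).Dom = f.Dom := by
        ext x
        constructor
        · rintro hx
          obtain ⟨u, hu⟩ := Part.dom_iff_mem.mp hx
          obtain ⟨y, hy, _⟩ := (memcomp x u).mp hu
          exact Part.dom_iff_mem.mpr ⟨y, hy⟩
        · intro hx
          obtain ⟨y, hy⟩ := Part.dom_iff_mem.mp hx
          have hda : (a y).Dom := hdom ⟨x, hy⟩
          exact Part.dom_iff_mem.mpr ⟨(a y).get hda,
            (memcomp x _).mpr ⟨y, hy, Part.get_mem hda⟩⟩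
      refine ⟨hDom, ?_⟩
      funext x x'
      ext
      constructor
      · rintro ⟨h1, h2, h3⟩
        rw [hDom] at h1 h2
        refine ⟨h1, h2, ?_⟩
        obtain ⟨y, hy⟩ := Part.dom_iff_mem.mp h1
        obtain ⟨z, hz⟩ := Part.dom_iff_mem.mp h2
        have hay : (a.comp f) x = a y := by
          rw [PFun.comp_apply, Part.eq_some_iff.mpr hy]; exact Part.bind_some _ _
        have haz : (a.comp f) x' = a z := by
          rw [PFun.comp_apply, Part.eq_some_iff.mpr hz]; exact Part.bind_some _ _
        have : a y = a z := by rw [← hay, ← haz, h3]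
        have := hinj _ ⟨x, hy⟩ _ ⟨x', hz⟩ this
        rw [Part.eq_some_iff.mpr hy, Part.eq_some_iff.mpr hz, this]
      · rintro ⟨h1, h2, h3⟩
        refine ⟨by rw [hDom]; exact h1, by rw [hDom]; exact h2, ?_⟩
        rw [PFun.comp_apply, PFun.comp_apply, h3]
    · rintro ⟨hDom, hker⟩
      have hran : f.ran ⊆ a.Dom := by
        rintro y ⟨x, hy⟩
        have hx : x ∈ f.Dom := Part.dom_iff_mem.mpr ⟨y, hy⟩
        rw [← hDom] at hx
        obtain ⟨u, hu⟩ := Part.dom_iff_mem.mp hx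
        obtain ⟨z, hz, huz⟩ := (memcomp x u).mp hu
        have : z = y := Part.mem_unique hz hy
        subst this
        exact Part.dom_iff_mem.mpr ⟨u, huz⟩
      refine ⟨hran, ?_⟩
      rintro y ⟨x, hy⟩ z ⟨x', hz⟩ haz
      have hay : (a.comp f) x = a y := by
        rw [PFun.comp_apply, Part.eq_some_iff.mpr hy]; exact Part.bind_some _ _
      have haz' : (a.comp f) x' = a z := by
        rw [PFun.comp_apply, Part.eq_some_iff.mpr hz]; exact Part.bind_some _ _
      have hx : x ∈ f.Dom := Part.dom_iff_mem.mpr ⟨y, hy⟩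
      have hx' : x' ∈ f.Dom := Part.dom_iff_mem.mpr ⟨z, hz⟩
      have hk : pker (a.comp f) x x' :=
        ⟨by rw [hDom]; exact hx, by rw [hDom]; exact hx', by rw [hay, haz', haz]⟩
      rw [hker] at hk
      obtain ⟨-, -, hfx⟩ := hk
      have : y ∈ f x' := hfx ▸ hy
      exact Part.mem_unique this hz
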